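/- arXiv:1203.5480 — 2 statements merged into one kernel-verified Lean document; each statement's English description precedes it below -/
import Mathlib

section
/- Let f be a bi-univalent function of the class S*_σ(φ), i.e. f is bi-univalent with inverse extension F and both zf'(z)/f(z) ≺ φ(z) and wF'(w)/F(w) ≺ φ(w). Then the second Taylor coefficient of f satisfies |a₂| ≤ √((B₁² + B₁ + |B₂ − B₁|)/2). -/
open Metric Set Complex

noncomputable section

/-- `g` is subordinate to `h` on the unit disk: there is an analytic `ω : 𝔻 → 𝔻`
with `ω 0 = 0` such that `g = h ∘ ω` on `𝔻`. -/
def Subordinate (g h : ℂ → ℂ) : Prop :=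
  ∃ ω : ℂ → ℂ, DifferentiableOn ℂ ω (ball 0 1) ∧ ω 0 = 0 ∧
    (∀ z ∈ ball (0 : ℂ) 1, ω z ∈ ball (0 : ℂ) 1) ∧
    ∀ z ∈ ball (0 : ℂ) 1, g z = h (ω z)


lemma schwarz_closed {k : ℂ → ℂ} (hd : DifferentiableOn ℂ k (ball 0 1)) (hk0 : k 0 = 0)
    (hb : ∀ z ∈ ball (0:ℂ) 1, ‖k z‖ ≤ 1) : ‖deriv k 0‖ ≤ 1 := by
  have h : ∀ ε : ℝ, 0 < ε → ‖deriv k 0‖ ≤ (1 + ε) / 1 := by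
    intro ε hε
    refine Complex.norm_deriv_le_div_of_mapsTo_ball hd ?_ one_pos
    intro z hz
    rw [hk0, mem_closedBall_zero_iff]
    exact le_trans (hb z hz) (by linarith)
  have := le_of_forall_pos_le_add (a := ‖deriv k 0‖) (b := 1) ?_
  · exact this
  · intro ε hε; simpa using (h ε hε).trans (by rw [div_one])

/-- Schwarz–Pick at the origin. -/
lemma schwarz_pick {h : ℂ → ℂ} (hd : DifferentiableOn ℂ h (ball 0 1))
    (hb : ∀ z ∈ ball (0:ℂ) 1, ‖h z‖ ≤ 1) : ‖deriv h 0‖ ≤ 1 - ‖h 0‖ ^ 2 := by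
  have h0mem : (0:ℂ) ∈ ball (0:ℂ) 1 := by simp
  have ha1 : ‖h 0‖ ≤ 1 := hb 0 h0mem
  rcases eq_or_lt_of_le ha1 with heq | hlt
  · have hmax : IsMaxOn (norm ∘ h) (ball (0:ℂ) 1) 0 :=
      fun z hz => le_of_le_of_eq (hb z hz) heq.symm
    have hcst := Complex.eqOn_of_isPreconnected_of_isMaxOn_norm
      (convex_ball (0:ℂ) 1).isPreconnected isOpen_ball hd h0mem hmax
    have hz : deriv h 0 = 0 := by
      have hev : h =ᶠ[nhds (0:ℂ)] fun _ => h 0 :=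
        Filter.eventuallyEq_of_mem (isOpen_ball.mem_nhds h0mem) hcst
      rw [hev.deriv_eq, deriv_const]
    rw [hz, norm_zero, heq]; norm_num
  · set a := h 0 with ha
    have hna : Complex.normSq a < 1 := by
      rw [← Complex.sq_norm]
      have : ‖a‖ < 1 := hlt
      nlinarith [norm_nonneg a]
    have hnsq : ∀ w : ℂ, ‖w‖ ≤ 1 → Complex.normSq w ≤ 1 := by
      intro w hw; rw [← Complex.sq_norm]
      have : ‖w‖ ≤ 1 := hw
      nlinarith [norm_nonneg w]
    have hkey : ∀ w : ℂ, ‖w‖ ≤ 1 → ‖w - a‖ ≤ ‖1 - (starRingEnd ℂ) a * w‖ := by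
      intro w hw
      have hw2 := hnsq w hw
      have hfact : 0 ≤ (1 - Complex.normSq a) * (1 - Complex.normSq w) :=
        mul_nonneg (by linarith) (by linarith)
      have key : Complex.normSq (w - a) ≤ Complex.normSq (1 - (starRingEnd ℂ) a * w) := by
        simp only [Complex.normSq_apply, Complex.sub_re, Complex.sub_im, Complex.mul_re,
          Complex.mul_im, Complex.conj_re, Complex.conj_im, Complex.one_re, Complex.one_im] at hfact ⊢
        nlinarith [hfact]
      have := Real.sqrt_le_sqrt key
      simpa [Complex.norm_def] using this
    have hden : ∀ w : ℂ, ‖w‖ ≤ 1 → (1 : ℂ) - (starRingEnd ℂ) a * w ≠ 0 := by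
      intro w hw hzero
      have h1 : (starRingEnd ℂ) a * w = 1 := by linear_combination -hzero
      have h2 : ‖(starRingEnd ℂ) a * w‖ = 1 := by rw [h1]; simp
      rw [norm_mul, RCLike.norm_conj] at h2
      nlinarith [norm_nonneg a, norm_nonneg w]
    set k : ℂ → ℂ := fun z => (h z - a) * ((1 : ℂ) - (starRingEnd ℂ) a * h z)⁻¹ with hk
    have hkd : DifferentiableOn ℂ k (ball 0 1) := by
      apply DifferentiableOn.mul (hd.sub_const a)
      apply DifferentiableOn.inv
      · exact (differentiableOn_const _).sub ((differentiableOn_const _).mul hd)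
      · intro z hz; exact hden (h z) (hb z hz)
    have hk0 : k 0 = 0 := by simp [hk, ← ha]
    have hkb : ∀ z ∈ ball (0:ℂ) 1, ‖k z‖ ≤ 1 := by
      intro z hz
      have hbw : ‖h z‖ ≤ 1 := hb z hz
      have hpos : 0 < ‖(1:ℂ) - (starRingEnd ℂ) a * h z‖ :=
        norm_pos_iff.mpr (hden (h z) hbw)
      rw [hk]
      simp only [← div_eq_mul_inv, norm_div]
      rw [div_le_one hpos]
      exact hkey (h z) hbw
    have hsch := schwarz_closed hkd hk0 hkb
    -- compute deriv k 0
    have hdh : HasDerivAt h (deriv h 0) 0 :=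
      (hd.differentiableAt (isOpen_ball.mem_nhds h0mem)).hasDerivAt
    have hne : (1 : ℂ) - (starRingEnd ℂ) a * h 0 ≠ 0 := hden (h 0) ha1
    have h2 : HasDerivAt (fun z => (1:ℂ) - (starRingEnd ℂ) a * h z)
        (-((starRingEnd ℂ) a * deriv h 0)) 0 := (hdh.const_mul _).const_sub 1
    have h3 := h2.fun_inv hne
    have h4 := (hdh.sub_const a).fun_mul h3
    have hsub0 : h 0 - a = 0 := by rw [ha, sub_self]
    have hval : (1 : ℂ) - (starRingEnd ℂ) a * h 0 = ((1 - Complex.normSq a : ℝ) : ℂ) := by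
      push_cast
      rw [← ha, mul_comm ((starRingEnd ℂ) a) a, Complex.mul_conj]
    have hder : deriv k 0 = deriv h 0 * (((1 - Complex.normSq a : ℝ) : ℂ))⁻¹ := by
      rw [hk, h4.deriv, hsub0, zero_mul, add_zero, hval]
    rw [hder, norm_mul, norm_inv] at hsch
    have hpos : (0:ℝ) < 1 - Complex.normSq a := by linarith
    have hnorm : ‖((1 - Complex.normSq a : ℝ) : ℂ)‖ = 1 - Complex.normSq a := by
      rw [Complex.norm_real, Real.norm_eq_abs, abs_of_pos hpos]
    rw [hnorm] at hsch
    have hfin : ‖deriv h 0‖ ≤ 1 - Complex.normSq a := by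
      rw [← div_eq_mul_inv, div_le_one hpos] at hsch; exact hsch
    have hsq : ‖a‖ ^ 2 = Complex.normSq a := by
      rw [Complex.sq_norm]
    linarith

lemma omega_bounds {ω : ℂ → ℂ} (hω : DifferentiableOn ℂ ω (ball 0 1)) (h0 : ω 0 = 0)
    (hm : ∀ z ∈ ball (0:ℂ) 1, ω z ∈ ball (0:ℂ) 1)
    (hSP : ∀ h : ℂ → ℂ, DifferentiableOn ℂ h (ball 0 1) →
      (∀ z ∈ ball (0:ℂ) 1, ‖h z‖ ≤ 1) → ‖deriv h 0‖ ≤ 1 - ‖h 0‖ ^ 2) :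
    ‖deriv ω 0‖ ≤ 1 ∧ ‖deriv (deriv ω) 0 / 2‖ ≤ 1 - ‖deriv ω 0‖ ^ 2 := by
  have h0mem : (0:ℂ) ∈ ball (0:ℂ) 1 := by simp
  set h : ℂ → ℂ := dslope ω 0 with hh
  have hhd : DifferentiableOn ℂ h (ball 0 1) :=
    (differentiableOn_dslope (ball_mem_nhds 0 one_pos)).mpr hω
  have hmaps : MapsTo ω (ball (0:ℂ) 1) (ball (ω 0) 1) := by rw [h0]; exact hm
  have hb : ∀ z ∈ ball (0:ℂ) 1, ‖h z‖ ≤ 1 := by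
    intro z hz
    simpa using Complex.norm_dslope_le_div_of_mapsTo_ball hω (hmaps.mono_right ball_subset_closedBall) hz
  have hh0 : h 0 = deriv ω 0 := dslope_same ω 0
  have hc1 : ‖deriv ω 0‖ ≤ 1 := by rw [← hh0]; exact hb 0 h0mem
  have hAh : AnalyticOnNhd ℂ h (ball 0 1) := hhd.analyticOnNhd isOpen_ball
  have hfun : ∀ z : ℂ, ω z = z * h z := by
    intro z
    have := sub_smul_dslope ω 0 z
    rw [sub_zero, h0, sub_zero, smul_eq_mul] at this
    exact this.symm
  have hev : deriv ω =ᶠ[nhds (0:ℂ)] fun z => h z + z * deriv h z := by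
    filter_upwards [isOpen_ball.mem_nhds h0mem] with z hz
    have : deriv ω z = deriv (fun y => y * h y) z := by
      congr 1; funext y; exact hfun y
    rw [this, deriv_fun_mul differentiableAt_fun_id ((hAh z hz).differentiableAt), deriv_id'', one_mul]
  have hd2 : deriv (deriv ω) 0 = 2 * deriv h 0 := by
    rw [hev.deriv_eq]
    have dh : DifferentiableAt ℂ h 0 := (hAh 0 h0mem).differentiableAt
    have dh' : DifferentiableAt ℂ (deriv h) 0 := ((hAh.deriv) 0 h0mem).differentiableAt
    rw [deriv_fun_add dh (differentiableAt_fun_id.fun_mul dh'),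
      deriv_fun_mul differentiableAt_fun_id dh', deriv_id'', one_mul]
    simp
    ring
  refine ⟨hc1, ?_⟩
  have := hSP h hhd hb
  rw [hh0] at this
  rw [hd2]
  have heq2 : (2:ℂ) * deriv h 0 / 2 = deriv h 0 := by ring
  rw [heq2]
  have := hSP h hhd hb
  rwa [hh0] at this

lemma evOfBall {u v : ℂ → ℂ} (h : ∀ z ∈ ball (0:ℂ) 1, u z = v z) : u =ᶠ[nhds (0:ℂ)] v :=
  Filter.eventuallyEq_of_mem (isOpen_ball.mem_nhds (by simp)) h

/-- first and second derivative of a composition at 0 -/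
lemma subord_coeffs {φ ω : ℂ → ℂ} (hφ : DifferentiableOn ℂ φ (ball 0 1))
    (hω : DifferentiableOn ℂ ω (ball 0 1)) (hω0 : ω 0 = 0)
    (hωm : ∀ z ∈ ball (0:ℂ) 1, ω z ∈ ball (0:ℂ) 1) :
    deriv (fun z => φ (ω z)) 0 = deriv φ 0 * deriv ω 0 ∧
    deriv (deriv (fun z => φ (ω z))) 0
      = deriv (deriv φ) 0 * (deriv ω 0) ^ 2 + deriv φ 0 * deriv (deriv ω) 0 := by
  have h0mem : (0:ℂ) ∈ ball (0:ℂ) 1 := by simp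
  have hAφ : AnalyticOnNhd ℂ φ (ball 0 1) := hφ.analyticOnNhd isOpen_ball
  have hAω : AnalyticOnNhd ℂ ω (ball 0 1) := hω.analyticOnNhd isOpen_ball
  have hball : ball (0:ℂ) 1 ∈ nhds (0:ℂ) := isOpen_ball.mem_nhds h0mem
  have hev1 : deriv (fun z => φ (ω z)) =ᶠ[nhds (0:ℂ)]
      fun z => deriv φ (ω z) * deriv ω z := by
    filter_upwards [hball] with z hz
    exact deriv_comp z ((hAφ _ (hωm z hz)).differentiableAt) ((hAω z hz).differentiableAt)
  constructor
  · rw [hev1.eq_of_nhds, hω0]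
  · rw [hev1.deriv_eq]
    have h1 : HasDerivAt (fun z => deriv φ (ω z)) (deriv (deriv φ) (ω 0) * deriv ω 0) 0 :=
      (((hAφ.deriv) _ (hωm 0 h0mem)).differentiableAt.hasDerivAt).comp 0
        ((hAω 0 h0mem).differentiableAt.hasDerivAt)
    have h2 : HasDerivAt ω (deriv ω 0) 0 := (hAω 0 h0mem).differentiableAt.hasDerivAt
    have h3 : HasDerivAt (deriv ω) (deriv (deriv ω) 0) 0 :=
      ((hAω.deriv) 0 h0mem).differentiableAt.hasDerivAt
    have h4 := (h1.fun_mul h3)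
    rw [h4.deriv, hω0]
    ring

lemma inverse_coeffs {f F : ℂ → ℂ} (hf : DifferentiableOn ℂ f (ball 0 1))
    (hF : DifferentiableOn ℂ F (ball 0 1)) (hf0 : f 0 = 0)
    (hFf : ∀ᶠ z in nhds (0:ℂ), F (f z) = z) :
    deriv F 0 * deriv f 0 = 1 ∧
    deriv (deriv F) 0 * (deriv f 0) ^ 2 + deriv F 0 * deriv (deriv f) 0 = 0 ∧
    deriv (deriv (deriv F)) 0 * (deriv f 0) ^ 3
      + 3 * deriv (deriv F) 0 * deriv f 0 * deriv (deriv f) 0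
      + deriv F 0 * deriv (deriv (deriv f)) 0 = 0 := by
  have h0mem : (0:ℂ) ∈ ball (0:ℂ) 1 := by simp
  have hAf : AnalyticOnNhd ℂ f (ball 0 1) := hf.analyticOnNhd isOpen_ball
  have hAF : AnalyticOnNhd ℂ F (ball 0 1) := hF.analyticOnNhd isOpen_ball
  have hball : ball (0:ℂ) 1 ∈ nhds (0:ℂ) := isOpen_ball.mem_nhds h0mem
  have hfc : ContinuousAt f 0 := ((hAf 0 h0mem).differentiableAt).continuousAt
  have hfmem : ∀ᶠ z in nhds (0:ℂ), f z ∈ ball (0:ℂ) 1 :=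
    hfc.eventually_mem (by rw [hf0]; exact hball)
  -- C1 : (fun z => deriv F (f z) * deriv f z) =ᶠ 1
  have hder : deriv (fun z => F (f z)) =ᶠ[nhds (0:ℂ)]
      fun z => deriv F (f z) * deriv f z := by
    filter_upwards [hball, hfmem] with z hz hfz
    exact deriv_comp z ((hAF _ hfz).differentiableAt) ((hAf z hz).differentiableAt)
  have hid : deriv (fun z : ℂ => F (f z)) =ᶠ[nhds (0:ℂ)] fun _ => (1:ℂ) := by
    have hFf' : (fun z => F (f z)) =ᶠ[nhds (0:ℂ)] fun z => z := hFf
    have := hFf'.deriv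
    simpa using this
  have C1 : (fun z => deriv F (f z) * deriv f z) =ᶠ[nhds (0:ℂ)] fun _ => (1:ℂ) :=
    hder.symm.trans hid
  have c1 : deriv F 0 * deriv f 0 = 1 := by
    have := C1.eq_of_nhds; rwa [hf0] at this
  -- C2 eventually
  have hder2 : deriv (fun z => deriv F (f z) * deriv f z) =ᶠ[nhds (0:ℂ)]
      fun z => deriv (deriv F) (f z) * deriv f z * deriv f z
        + deriv F (f z) * deriv (deriv f) z := by
    filter_upwards [hball, hfmem] with z hz hfz
    have d1 : DifferentiableAt ℂ (fun y => deriv F (f y)) z :=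
      ((hAF.deriv _ hfz).differentiableAt).comp z ((hAf z hz).differentiableAt)
    have d2 : DifferentiableAt ℂ (deriv f) z := (hAf.deriv z hz).differentiableAt
    rw [deriv_fun_mul d1 d2,
      show deriv (fun y => deriv F (f y)) z = deriv (deriv F) (f z) * deriv f z from
        deriv_comp z ((hAF.deriv _ hfz).differentiableAt) ((hAf z hz).differentiableAt)]
  have C2 : (fun z => deriv (deriv F) (f z) * deriv f z * deriv f z
      + deriv F (f z) * deriv (deriv f) z) =ᶠ[nhds (0:ℂ)] fun _ => (0:ℂ) := by
    refine hder2.symm.trans ?_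
    have := C1.deriv
    simpa using this
  have c2 : deriv (deriv F) 0 * (deriv f 0) ^ 2 + deriv F 0 * deriv (deriv f) 0 = 0 := by
    have := C2.eq_of_nhds; rw [hf0] at this; linear_combination this
  -- C3 at 0 via HasDerivAt
  have hdf : HasDerivAt f (deriv f 0) 0 := (hAf 0 h0mem).differentiableAt.hasDerivAt
  have hddf : HasDerivAt (deriv f) (deriv (deriv f) 0) 0 :=
    (hAf.deriv 0 h0mem).differentiableAt.hasDerivAt
  have hdddf : HasDerivAt (deriv (deriv f)) (deriv (deriv (deriv f)) 0) 0 :=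
    (hAf.deriv.deriv 0 h0mem).differentiableAt.hasDerivAt
  have hFm : f 0 ∈ ball (0:ℂ) 1 := by rw [hf0]; exact h0mem
  have hdF : HasDerivAt (fun z => deriv F (f z)) (deriv (deriv F) (f 0) * deriv f 0) 0 :=
    ((hAF.deriv _ hFm).differentiableAt.hasDerivAt).comp 0 hdf
  have hddF : HasDerivAt (fun z => deriv (deriv F) (f z))
      (deriv (deriv (deriv F)) (f 0) * deriv f 0) 0 :=
    ((hAF.deriv.deriv _ hFm).differentiableAt.hasDerivAt).comp 0 hdf
  have HL := ((hddF.fun_mul hddf).fun_mul hddf).fun_add (hdF.fun_mul hdddf)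
  have c3 : deriv (deriv (deriv F)) 0 * (deriv f 0) ^ 3
      + 3 * deriv (deriv F) 0 * deriv f 0 * deriv (deriv f) 0
      + deriv F 0 * deriv (deriv (deriv f)) 0 = 0 := by
    have hC := C2.deriv_eq
    rw [HL.deriv] at hC
    rw [deriv_const] at hC
    rw [hf0] at hC
    linear_combination hC
  exact ⟨c1, c2, c3⟩

lemma starlike_coeffs {f g : ℂ → ℂ} (hf : DifferentiableOn ℂ f (ball 0 1))
    (hg : DifferentiableOn ℂ g (ball 0 1)) (hf0 : f 0 = 0) (hf1 : deriv f 0 = 1)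
    (hg0 : g 0 = 1) (hPQ : ∀ z ∈ ball (0:ℂ) 1, g z * f z = z * deriv f z) :
    2 * deriv g 0 = deriv (deriv f) 0 ∧
    3 * deriv (deriv g) 0 + 3 * deriv g 0 * deriv (deriv f) 0 = 2 * deriv (deriv (deriv f)) 0 := by
  have h0mem : (0:ℂ) ∈ ball (0:ℂ) 1 := by simp
  have hAf : AnalyticOnNhd ℂ f (ball 0 1) := hf.analyticOnNhd isOpen_ball
  have hAg : AnalyticOnNhd ℂ g (ball 0 1) := hg.analyticOnNhd isOpen_ball
  have hball : ball (0:ℂ) 1 ∈ nhds (0:ℂ) := isOpen_ball.mem_nhds h0mem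
  have hE0 : (fun z => g z * f z) =ᶠ[nhds (0:ℂ)] fun z => z * deriv f z :=
    Filter.eventuallyEq_of_mem hball hPQ
  have hL1 : deriv (fun z => g z * f z) =ᶠ[nhds (0:ℂ)]
      fun z => deriv g z * f z + g z * deriv f z := by
    filter_upwards [hball] with z hz
    exact deriv_fun_mul (hAg z hz).differentiableAt (hAf z hz).differentiableAt
  have hR1 : deriv (fun z => z * deriv f z) =ᶠ[nhds (0:ℂ)]
      fun z => deriv f z + z * deriv (deriv f) z := by
    filter_upwards [hball] with z hz
    rw [deriv_fun_mul differentiableAt_fun_id (hAf.deriv z hz).differentiableAt, deriv_id'', one_mul]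
  have E1 : (fun z => deriv g z * f z + g z * deriv f z) =ᶠ[nhds (0:ℂ)]
      fun z => deriv f z + z * deriv (deriv f) z := hL1.symm.trans (hE0.deriv.trans hR1)
  have hL2 : deriv (fun z => deriv g z * f z + g z * deriv f z) =ᶠ[nhds (0:ℂ)]
      fun z => (deriv (deriv g) z * f z + deriv g z * deriv f z)
        + (deriv g z * deriv f z + g z * deriv (deriv f) z) := by
    filter_upwards [hball] with z hz
    have d1 : DifferentiableAt ℂ (deriv g) z := (hAg.deriv z hz).differentiableAt
    have d2 : DifferentiableAt ℂ f z := (hAf z hz).differentiableAt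
    have d3 : DifferentiableAt ℂ g z := (hAg z hz).differentiableAt
    have d4 : DifferentiableAt ℂ (deriv f) z := (hAf.deriv z hz).differentiableAt
    rw [deriv_fun_add (d1.fun_mul d2) (d3.fun_mul d4), deriv_fun_mul d1 d2, deriv_fun_mul d3 d4]
  have hR2 : deriv (fun z => deriv f z + z * deriv (deriv f) z) =ᶠ[nhds (0:ℂ)]
      fun z => deriv (deriv f) z + (deriv (deriv f) z + z * deriv (deriv (deriv f)) z) := by
    filter_upwards [hball] with z hz
    have d4 : DifferentiableAt ℂ (deriv f) z := (hAf.deriv z hz).differentiableAt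
    have d5 : DifferentiableAt ℂ (deriv (deriv f)) z := (hAf.deriv.deriv z hz).differentiableAt
    rw [deriv_fun_add d4 (differentiableAt_fun_id.fun_mul d5), deriv_fun_mul differentiableAt_fun_id d5,
      deriv_id'', one_mul]
  have E2 : (fun z => (deriv (deriv g) z * f z + deriv g z * deriv f z)
        + (deriv g z * deriv f z + g z * deriv (deriv f) z)) =ᶠ[nhds (0:ℂ)]
      fun z => deriv (deriv f) z + (deriv (deriv f) z + z * deriv (deriv (deriv f)) z) :=
    hL2.symm.trans (E1.deriv.trans hR2)
  have r1 : 2 * deriv g 0 = deriv (deriv f) 0 := by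
    have := E2.eq_of_nhds
    simp only [hf0, hf1, hg0, mul_zero, zero_mul, mul_one, one_mul, add_zero, zero_add] at this
    linear_combination this
  refine ⟨r1, ?_⟩
  -- third order: differentiate E2 at 0
  have hasf : HasDerivAt f (deriv f 0) 0 := (hAf 0 h0mem).differentiableAt.hasDerivAt
  have hasdf : HasDerivAt (deriv f) (deriv (deriv f) 0) 0 :=
    (hAf.deriv 0 h0mem).differentiableAt.hasDerivAt
  have hasddf : HasDerivAt (deriv (deriv f)) (deriv (deriv (deriv f)) 0) 0 :=
    (hAf.deriv.deriv 0 h0mem).differentiableAt.hasDerivAt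
  have hasdddf : HasDerivAt (deriv (deriv (deriv f))) (deriv (deriv (deriv (deriv f))) 0) 0 :=
    (hAf.deriv.deriv.deriv 0 h0mem).differentiableAt.hasDerivAt
  have hasg : HasDerivAt g (deriv g 0) 0 := (hAg 0 h0mem).differentiableAt.hasDerivAt
  have hasdg : HasDerivAt (deriv g) (deriv (deriv g) 0) 0 :=
    (hAg.deriv 0 h0mem).differentiableAt.hasDerivAt
  have hasddg : HasDerivAt (deriv (deriv g)) (deriv (deriv (deriv g)) 0) 0 :=
    (hAg.deriv.deriv 0 h0mem).differentiableAt.hasDerivAt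
  have HL := ((hasddg.fun_mul hasf).fun_add (hasdg.fun_mul hasdf)).fun_add
    ((hasdg.fun_mul hasdf).fun_add (hasg.fun_mul hasddf))
  have HR := hasddf.fun_add (hasddf.fun_add ((hasDerivAt_id' (x := (0:ℂ))).fun_mul hasdddf))
  have hC := E2.deriv_eq
  rw [HL.deriv, HR.deriv] at hC
  rw [hf0, hf1, hg0] at hC
  linear_combination hC

theorem stmt3
    (f F : ℂ → ℂ)
    (hf : DifferentiableOn ℂ f (ball 0 1)) (hf0 : f 0 = 0) (hf1 : deriv f 0 = 1)
    (hfi : InjOn f (ball 0 1))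
    (hF : DifferentiableOn ℂ F (ball 0 1)) (hF0 : F 0 = 0) (hFi : InjOn F (ball 0 1))
    (hFf : ∀ᶠ z in nhds (0 : ℂ), F (f z) = z)
    (φ : ℂ → ℂ) (B₁ B₂ : ℝ)
    (hφ : DifferentiableOn ℂ φ (ball 0 1)) (hφ0 : φ 0 = 1)
    (hB₁ : 0 < B₁) (hφ1 : deriv φ 0 = (B₁ : ℂ)) (hφ2 : iteratedDeriv 2 φ 0 = 2 * (B₂ : ℂ))
    (g : ℂ → ℂ) (hg0 : g 0 = 1)
    (hgf : ∀ z ∈ ball (0 : ℂ) 1, z ≠ 0 → g z = z * deriv f z / f z)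
    (hgsub : Subordinate g φ)
    (G : ℂ → ℂ) (hG0 : G 0 = 1)
    (hGF : ∀ w ∈ ball (0 : ℂ) 1, w ≠ 0 → G w = w * deriv F w / F w)
    (hGsub : Subordinate G φ) :
    ‖iteratedDeriv 2 f 0 / 2‖ ≤ Real.sqrt ((B₁ ^ 2 + B₁ + |B₂ - B₁|) / 2) := by
  have h0mem : (0:ℂ) ∈ ball (0:ℂ) 1 := by simp
  obtain ⟨ω, hωd, hω0, hωm, hωeq⟩ := hgsub
  obtain ⟨τ, hτd, hτ0, hτm, hτeq⟩ := hGsub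
  set gh : ℂ → ℂ := fun z => φ (ω z) with hgh
  set Gh : ℂ → ℂ := fun z => φ (τ z) with hGh
  have hghd : DifferentiableOn ℂ gh (ball 0 1) := hφ.comp hωd hωm
  have hGhd : DifferentiableOn ℂ Gh (ball 0 1) := hφ.comp hτd hτm
  have hgh0 : gh 0 = 1 := by rw [hgh]; simp only [hω0, hφ0]
  have hGh0 : Gh 0 = 1 := by rw [hGh]; simp only [hτ0, hφ0]
  -- the functional identity for (f, gh)
  have hPQg : ∀ z ∈ ball (0:ℂ) 1, gh z * f z = z * deriv f z := by
    intro z hz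
    rcases eq_or_ne z 0 with rfl | hz0
    · rw [hf0, mul_zero, zero_mul]
    · have hfz : f z ≠ 0 := by
        intro h
        exact hz0 (hfi hz h0mem (by rw [h, hf0]))
      have h1 : gh z = g z := (hωeq z hz).symm
      rw [h1, hgf z hz hz0, div_mul_cancel₀ _ hfz]
  -- inverse coefficients
  obtain ⟨i1, i2, i3⟩ := inverse_coeffs hf hF hf0 hFf
  rw [hf1, mul_one] at i1
  rw [hf1, i1] at i2 i3
  -- i2 : ddF0 * 1^2 + 1 * ddf0 = 0 ; i3 similar
  have hAF : deriv (deriv F) 0 = - deriv (deriv f) 0 := by linear_combination i2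
  have hF3 : deriv (deriv (deriv F)) 0
      = 3 * (deriv (deriv f) 0)^2 - deriv (deriv (deriv f)) 0 := by
    linear_combination i3 - 3 * deriv (deriv f) 0 * hAF
  -- the functional identity for (F, Gh)
  have hPQG : ∀ w ∈ ball (0:ℂ) 1, Gh w * F w = w * deriv F w := by
    intro w hw
    rcases eq_or_ne w 0 with rfl | hw0
    · rw [hF0, mul_zero, zero_mul]
    · have hFw : F w ≠ 0 := by
        intro h
        exact hw0 (hFi hw h0mem (by rw [h, hF0]))
      have h1 : Gh w = G w := (hτeq w hw).symm
      rw [h1, hGF w hw hw0, div_mul_cancel₀ _ hFw]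
  obtain ⟨e1, e2⟩ := starlike_coeffs hf hghd hf0 hf1 hgh0 hPQg
  obtain ⟨e1', e2'⟩ := starlike_coeffs hF hGhd hF0 i1 hGh0 hPQG
  -- subordination coefficients
  obtain ⟨s1, s2⟩ := subord_coeffs hφ hωd hω0 hωm
  obtain ⟨s1', s2'⟩ := subord_coeffs hφ hτd hτ0 hτm
  have hφ2' : deriv (deriv φ) 0 = 2 * (B₂ : ℂ) := by
    rw [← hφ2, iteratedDeriv_succ, iteratedDeriv_one]
  rw [hφ1] at s1 s1'
  rw [hφ1, hφ2'] at s2 s2'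
  -- clean coefficient equations
  set A : ℂ := deriv (deriv f) 0 with hA
  set c1 : ℂ := deriv ω 0 with hc1
  set d1 : ℂ := deriv τ 0 with hd1
  set w2 : ℂ := deriv (deriv ω) 0 with hw2
  set u2 : ℂ := deriv (deriv τ) 0 with hu2
  have keyA : (B₁ : ℂ) * c1 = A / 2 := by
    rw [← s1]; linear_combination e1 / 2
  have keyB : (B₁ : ℂ) * d1 = -(A / 2) := by
    rw [← s1']; linear_combination e1' / 2 + hAF / 2
  have q1 : deriv gh 0 = A / 2 := by rw [s1]; exact keyA
  have q2 : deriv Gh 0 = -(A / 2) := by rw [s1']; exact keyB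
  rw [q1] at e2
  rw [q2, hAF, hF3] at e2'
  have q3 : deriv (deriv gh) 0 + deriv (deriv Gh) 0 = A ^ 2 := by
    linear_combination e2 / 3 + e2' / 3
  have keyC : 2 * (B₂:ℂ) * c1 ^ 2 + (B₁:ℂ) * w2 + (2 * (B₂:ℂ) * d1 ^ 2 + (B₁:ℂ) * u2)
      = A ^ 2 := by
    rw [← s2, ← s2']; exact q3
  -- Schwarz-Pick bounds
  have hSP : ∀ h : ℂ → ℂ, DifferentiableOn ℂ h (ball 0 1) →
      (∀ z ∈ ball (0:ℂ) 1, ‖h z‖ ≤ 1) → ‖deriv h 0‖ ≤ 1 - ‖h 0‖ ^ 2 :=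
    fun h hd hb => schwarz_pick hd hb
  obtain ⟨hc1b, hw2b⟩ := omega_bounds hωd hω0 hωm hSP
  obtain ⟨hd1b, hu2b⟩ := omega_bounds hτd hτ0 hτm hSP
  -- pass to norms
  have hB1n : ‖((B₁:ℝ):ℂ)‖ = B₁ := by
    rw [Complex.norm_real, Real.norm_eq_abs, abs_of_pos hB₁]
  set t : ℝ := ‖c1‖ with ht
  set x : ℝ := ‖A / 2‖ with hx
  have hxt : x = B₁ * t := by
    rw [hx, ← keyA, norm_mul, hB1n, ht]
  have hdt : ‖d1‖ = t := by
    have h1 : ‖(B₁:ℂ) * d1‖ = ‖-(A/2)‖ := by rw [keyB]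
    rw [norm_mul, hB1n, norm_neg, ← hx, hxt] at h1
    exact mul_left_cancel₀ (ne_of_gt hB₁) h1
  rw [hdt] at hu2b
  -- norm bound from keyC
  have habs : 4 * x ^ 2 ≤ 4 * |B₂| * t ^ 2 + 4 * B₁ * (1 - t ^ 2) := by
    have hnA : ‖A‖ = 2 * x := by
      rw [hx, norm_div]
      have h2 : ‖(2:ℂ)‖ = 2 := by norm_num
      rw [h2]; ring
    have h4 : ‖A ^ 2‖ = 4 * x ^ 2 := by
      rw [norm_pow, hnA]; ring
    have hB2n : ‖((B₂:ℝ):ℂ)‖ = |B₂| := by rw [Complex.norm_real, Real.norm_eq_abs]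
    calc 4 * x ^ 2 = ‖A ^ 2‖ := h4.symm
      _ = ‖2 * (B₂:ℂ) * c1 ^ 2 + (B₁:ℂ) * w2 + (2 * (B₂:ℂ) * d1 ^ 2 + (B₁:ℂ) * u2)‖ := by
          rw [keyC]
      _ ≤ ‖2 * (B₂:ℂ) * c1 ^ 2‖ + ‖(B₁:ℂ) * w2‖ + (‖2 * (B₂:ℂ) * d1 ^ 2‖ + ‖(B₁:ℂ) * u2‖) := by
          refine le_trans (norm_add_le _ _) ?_
          gcongr
          · exact norm_add_le _ _
          · exact norm_add_le _ _
      _ ≤ 2 * |B₂| * t ^ 2 + B₁ * (2 * (1 - t ^ 2)) + (2 * |B₂| * t ^ 2 + B₁ * (2 * (1 - t ^ 2))) := by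
          have n1 : ‖2 * (B₂:ℂ) * c1 ^ 2‖ = 2 * |B₂| * t ^ 2 := by
            rw [norm_mul, norm_mul, hB2n, norm_pow, ← ht]; norm_num
          have n2 : ‖2 * (B₂:ℂ) * d1 ^ 2‖ = 2 * |B₂| * t ^ 2 := by
            rw [norm_mul, norm_mul, hB2n, norm_pow, hdt]; norm_num
          have h2n : ‖(2:ℂ)‖ = 2 := by norm_num
          have n3 : ‖(B₁:ℂ) * w2‖ ≤ B₁ * (2 * (1 - t ^ 2)) := by
            rw [norm_mul, hB1n]
            rw [norm_div, h2n] at hw2b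
            have hle : ‖w2‖ ≤ 2 * (1 - t ^ 2) := by linarith
            exact mul_le_mul_of_nonneg_left hle hB₁.le
          have n4 : ‖(B₁:ℂ) * u2‖ ≤ B₁ * (2 * (1 - t ^ 2)) := by
            rw [norm_mul, hB1n]
            rw [norm_div, h2n] at hu2b
            have hle : ‖u2‖ ≤ 2 * (1 - t ^ 2) := by linarith
            exact mul_le_mul_of_nonneg_left hle hB₁.le
          rw [n1, n2]
          gcongr
      _ = 4 * |B₂| * t ^ 2 + 4 * B₁ * (1 - t ^ 2) := by ring
  -- final real arithmetic
  have htle : t ≤ 1 := hc1b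
  have htnn : 0 ≤ t := norm_nonneg _
  have hB2tri : |B₂| ≤ B₁ + |B₂ - B₁| := by
    have := abs_sub_abs_le_abs_sub B₂ B₁
    rw [abs_of_pos hB₁] at this
    linarith
  have ht2 : t ^ 2 ≤ 1 := by nlinarith
  have hgoal2 : x ^ 2 ≤ (B₁ ^ 2 + B₁ + |B₂ - B₁|) / 2 := by
    have h1 : |B₂| * t ^ 2 ≤ (B₁ + |B₂ - B₁|) * t ^ 2 :=
      mul_le_mul_of_nonneg_right hB2tri (sq_nonneg t)
    have h2 : t ^ 2 * (|B₂ - B₁| + B₁ ^ 2) ≤ 1 * (|B₂ - B₁| + B₁ ^ 2) :=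
      mul_le_mul_of_nonneg_right ht2 (by positivity)
    have hx2 : x ^ 2 = B₁ ^ 2 * t ^ 2 := by rw [hxt]; ring
    linarith [hx2, habs, h1, h2]
  have hxnn : 0 ≤ x := norm_nonneg _
  have hfinal : x ≤ Real.sqrt ((B₁ ^ 2 + B₁ + |B₂ - B₁|) / 2) := by
    rw [show x = Real.sqrt (x ^ 2) from (Real.sqrt_sq hxnn).symm]
    exact Real.sqrt_le_sqrt hgoal2
  have hit : iteratedDeriv 2 f 0 = deriv (deriv f) 0 := by
    rw [iteratedDeriv_succ, iteratedDeriv_one]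
  rw [hit]
  exact hfinal
end
end

section
/- Let 0 ≤ β < 1 and let f be a bi-starlike function of order β, i.e. f is bi-univalent with inverse extension F and both zf'(z)/f(z) ≺ (1+(1−2β)z)/(1−z) and wF'(w)/F(w) ≺ (1+(1−2β)w)/(1−w) (equivalently, Re(zf'(z)/f(z)) > β and Re(wF'(w)/F(w)) > β on 𝔻). Then the second Taylor coefficient of f satisfies |a₂| ≤ min{ √(2(1−β)), √((1−β)(3−2β)) }; in particular |a₂| ≤ √(2(1−β)) for 0 ≤ β ≤ 1/2 and |a₂| ≤ √((1−β)(3−2β)) for 1/2 ≤ β < 1. -/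
open Metric Set Complex
open Filter Topology

noncomputable section


lemma aDeriv {p : ℂ → ℂ} {x : ℂ} (h : AnalyticAt ℂ p x) : AnalyticAt ℂ (deriv p) x := by
  obtain ⟨s, hs, h2⟩ := h.eventually_analyticAt.exists_mem
  exact AnalyticOnNhd.deriv (fun y hy => h2 y hy) x (mem_of_mem_nhds hs)

lemma ev_deriv_mul {p q : ℂ → ℂ} (hp : AnalyticAt ℂ p 0) (hq : AnalyticAt ℂ q 0) :
    deriv (fun z => p z * q z) =ᶠ[𝓝 0] fun z => deriv p z * q z + p z * deriv q z := by
  filter_upwards [hp.eventually_analyticAt, hq.eventually_analyticAt] with z hpz hqz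
  exact deriv_mul hpz.differentiableAt hqz.differentiableAt

lemma ev_deriv_add {p q : ℂ → ℂ} (hp : AnalyticAt ℂ p 0) (hq : AnalyticAt ℂ q 0) :
    deriv (fun z => p z + q z) =ᶠ[𝓝 0] fun z => deriv p z + deriv q z := by
  filter_upwards [hp.eventually_analyticAt, hq.eventually_analyticAt] with z hpz hqz
  exact deriv_add hpz.differentiableAt hqz.differentiableAt

lemma deriv_mul_zero {p q : ℂ → ℂ} (hp : AnalyticAt ℂ p 0) (hq : AnalyticAt ℂ q 0) :
    deriv (fun z => p z * q z) 0 = deriv p 0 * q 0 + p 0 * deriv q 0 :=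
  deriv_mul hp.differentiableAt hq.differentiableAt

lemma deriv2_mul {p q : ℂ → ℂ} (hp : AnalyticAt ℂ p 0) (hq : AnalyticAt ℂ q 0) :
    deriv (deriv (fun z => p z * q z)) 0 =
      deriv (deriv p) 0 * q 0 + 2 * (deriv p 0 * deriv q 0) + p 0 * deriv (deriv q) 0 := by
  rw [(ev_deriv_mul hp hq).deriv_eq]
  rw [deriv_fun_add ((aDeriv hp).fun_mul hq).differentiableAt (hp.fun_mul (aDeriv hq)).differentiableAt,
    deriv_fun_mul (aDeriv hp).differentiableAt hq.differentiableAt,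
    deriv_fun_mul hp.differentiableAt (aDeriv hq).differentiableAt]
  ring

lemma aid : AnalyticAt ℂ (fun z : ℂ => z) (0:ℂ) := analyticAt_id

lemma ev_id_mul {q : ℂ → ℂ} (hq : AnalyticAt ℂ q 0) :
    deriv (fun z => z * q z) =ᶠ[𝓝 0] fun z => q z + z * deriv q z := by
  refine (ev_deriv_mul aid hq).trans (Eventually.of_forall fun z => ?_)
  simp

lemma ev2_id_mul {q : ℂ → ℂ} (hq : AnalyticAt ℂ q 0) :
    deriv (deriv (fun z => z * q z)) =ᶠ[𝓝 0]
      fun z => 2 * deriv q z + z * deriv (deriv q) z := by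
  refine (ev_id_mul hq).deriv.trans ?_
  refine ((ev_deriv_add hq (aid.mul (aDeriv hq))).trans ?_)
  refine (((EventuallyEq.refl _ (deriv q)).add (ev_id_mul (aDeriv hq))).trans ?_)
  exact Eventually.of_forall fun z => by simp only [Pi.add_apply]; ring

lemma d1_id_mul {q : ℂ → ℂ} (hq : AnalyticAt ℂ q 0) :
    deriv (fun z => z * q z) 0 = q 0 := by
  have := (ev_id_mul hq).eq_of_nhds
  simpa using this

lemma d2_id_mul {q : ℂ → ℂ} (hq : AnalyticAt ℂ q 0) :
    deriv (deriv (fun z => z * q z)) 0 = 2 * deriv q 0 := by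
  have := (ev2_id_mul hq).eq_of_nhds
  simpa using this

lemma d3_id_mul {q : ℂ → ℂ} (hq : AnalyticAt ℂ q 0) :
    deriv (deriv (deriv (fun z => z * q z))) 0 = 3 * deriv (deriv q) 0 := by
  rw [(ev2_id_mul hq).deriv_eq]
  have h1 : deriv (fun z => 2 * deriv q z + z * deriv (deriv q) z) 0
      = 2 * deriv (deriv q) 0 + (deriv (deriv q) 0 + 0 * deriv (deriv (deriv q)) 0) := by
    rw [deriv_fun_add ((analyticAt_const.fun_mul (aDeriv hq)).differentiableAt)
        ((aid.fun_mul (aDeriv (aDeriv hq))).differentiableAt),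
      deriv_const_mul _ (aDeriv hq).differentiableAt,
      (ev_id_mul (aDeriv (aDeriv hq))).eq_of_nhds]
  rw [h1]; ring

lemma ev_deriv_comp {p f : ℂ → ℂ} (hf : AnalyticAt ℂ f 0) (hp : AnalyticAt ℂ p (f 0)) :
    deriv (fun z => p (f z)) =ᶠ[𝓝 0] fun z => deriv p (f z) * deriv f z := by
  filter_upwards [hf.eventually_analyticAt,
    hf.continuousAt.eventually hp.eventually_analyticAt] with z h1 h2
  exact deriv_comp z h2.differentiableAt h1.differentiableAt

lemma F_coeffs {f F : ℂ → ℂ} (hfa : AnalyticAt ℂ f 0) (hFa : AnalyticAt ℂ F 0)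
    (hf0 : f 0 = 0) (hf1 : deriv f 0 = 1) (hFf : ∀ᶠ z in 𝓝 (0:ℂ), F (f z) = z) :
    deriv F 0 = 1 ∧
    deriv (deriv F) 0 = - deriv (deriv f) 0 ∧
    deriv (deriv (deriv F)) 0 = 3 * (deriv (deriv f) 0)^2 - deriv (deriv (deriv f)) 0 := by
  have hFat : AnalyticAt ℂ F (f 0) := by rw [hf0]; exact hFa
  have E1 : deriv (fun z => F (f z)) =ᶠ[𝓝 0] fun z => deriv F (f z) * deriv f z :=
    ev_deriv_comp hfa hFat
  have Eid : (fun z => F (f z)) =ᶠ[𝓝 (0:ℂ)] fun z => z := hFf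
  have C1 : (fun z => deriv F (f z) * deriv f z) =ᶠ[𝓝 (0:ℂ)] fun _ => (1:ℂ) :=
    E1.symm.trans (Eid.deriv.trans (Eventually.of_forall fun z => by simp))
  have h1 : deriv F 0 = 1 := by
    have := C1.eq_of_nhds
    simp only [hf0, hf1, mul_one] at this
    exact this
  have hcomp1 : AnalyticAt ℂ (fun z => deriv F (f z)) 0 := (aDeriv hFat).comp hfa
  have E2 : deriv (fun z => deriv F (f z) * deriv f z) =ᶠ[𝓝 0]
      fun z => deriv (deriv F) (f z) * deriv f z * deriv f z
        + deriv F (f z) * deriv (deriv f) z := by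
    refine (ev_deriv_mul hcomp1 (aDeriv hfa)).trans ?_
    exact ((ev_deriv_comp hfa (aDeriv hFat)).mul (EventuallyEq.refl _ _)).add
      (EventuallyEq.refl _ _)
  have C2 : (fun z => deriv (deriv F) (f z) * deriv f z * deriv f z
        + deriv F (f z) * deriv (deriv f) z) =ᶠ[𝓝 (0:ℂ)] fun _ => (0:ℂ) :=
    E2.symm.trans (C1.deriv.trans (Eventually.of_forall fun z => by simp))
  have h2 : deriv (deriv F) 0 = - deriv (deriv f) 0 := by
    have := C2.eq_of_nhds
    simp only [hf0, hf1, h1, mul_one, one_mul] at this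
    linear_combination this
  refine ⟨h1, h2, ?_⟩
  have hd2F : AnalyticAt ℂ (fun z => deriv (deriv F) (f z)) 0 :=
    (aDeriv (aDeriv hFat)).comp hfa
  have hdf : AnalyticAt ℂ (deriv f) 0 := aDeriv hfa
  have h3' : deriv (fun z => deriv (deriv F) (f z) * deriv f z * deriv f z
        + deriv F (f z) * deriv (deriv f) z) 0 = 0 := by
    rw [C2.deriv_eq]; simp
  have e1 : deriv (fun z => deriv (deriv F) (f z)) 0
      = deriv (deriv (deriv F)) (f 0) * deriv f 0 := by
    simpa [Function.comp_def] using
      deriv_comp 0 (aDeriv (aDeriv hFat)).differentiableAt hfa.differentiableAt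
  have e2 : deriv (fun z => deriv F (f z)) 0 = deriv (deriv F) (f 0) * deriv f 0 := by
    simpa [Function.comp_def] using
      deriv_comp 0 (aDeriv hFat).differentiableAt hfa.differentiableAt
  rw [deriv_fun_add ((hd2F.fun_mul hdf).fun_mul hdf).differentiableAt
      (hcomp1.fun_mul (aDeriv hdf)).differentiableAt,
    deriv_fun_mul (hd2F.fun_mul hdf).differentiableAt hdf.differentiableAt,
    deriv_fun_mul hd2F.differentiableAt hdf.differentiableAt,
    deriv_fun_mul hcomp1.differentiableAt (aDeriv hdf).differentiableAt,
    e1, e2] at h3'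
  simp only [hf0, hf1, h1, h2, mul_one, one_mul] at h3'
  linear_combination h3'

lemma side {f : ℂ → ℂ} (hf : DifferentiableOn ℂ f (ball 0 1)) (hf0 : f 0 = 0)
    (hf1 : deriv f 0 = 1) (hfne : ∀ z ∈ ball (0:ℂ) 1, z ≠ 0 → f z ≠ 0) :
    ∃ h : ℂ → ℂ, DifferentiableOn ℂ h (ball 0 1) ∧ h 0 = 1 ∧
      (∀ z ∈ ball (0:ℂ) 1, z ≠ 0 → h z = z * deriv f z / f z) ∧
      deriv h 0 = deriv (deriv f) 0 / 2 ∧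
      deriv (deriv h) 0 = (2/3) * deriv (deriv (deriv f)) 0 - (deriv (deriv f) 0)^2 / 2 := by
  have h0m : (0:ℂ) ∈ ball (0:ℂ) 1 := mem_ball_self one_pos
  set u : ℂ → ℂ := dslope f 0 with hu_def
  have hu : DifferentiableOn ℂ u (ball 0 1) :=
    (differentiableOn_dslope (ball_mem_nhds _ one_pos)).mpr hf
  have hid : ∀ z : ℂ, z * u z = f z := fun z => by
    simpa [hf0, smul_eq_mul] using sub_smul_dslope f 0 z
  have hfeq : f = fun z => z * u z := funext fun z => (hid z).symm
  have ua : AnalyticAt ℂ u 0 := (hu.analyticOnNhd isOpen_ball) 0 h0m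
  have hu0 : u 0 = 1 := by rw [← hf1, hfeq, d1_id_mul ua]
  have hu1 : deriv u 0 = deriv (deriv f) 0 / 2 := by
    rw [hfeq, d2_id_mul ua]; ring
  have hu2 : deriv (deriv u) 0 = deriv (deriv (deriv f)) 0 / 3 := by
    rw [hfeq, d3_id_mul ua]; ring
  have hune : ∀ z ∈ ball (0:ℂ) 1, u z ≠ 0 := by
    intro z hz
    rcases eq_or_ne z 0 with rfl | hz0
    · rw [hu0]; exact one_ne_zero
    · intro h
      apply hfne z hz hz0
      rw [← hid z, h, mul_zero]
  have hdf : DifferentiableOn ℂ (deriv f) (ball 0 1) := fun z hz =>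
    (aDeriv ((hf.analyticOnNhd isOpen_ball) z hz)).differentiableAt.differentiableWithinAt
  refine ⟨fun z => deriv f z / u z, hdf.div hu hune, by simp [hf1, hu0], ?_, ?_⟩
  · intro z hz hz0
    rw [← hid z, mul_div_mul_left _ _ hz0]
  have hha : AnalyticAt ℂ (fun z => deriv f z / u z) 0 :=
    ((hdf.div hu hune).analyticOnNhd isOpen_ball) 0 h0m
  have hprod : (fun z => (deriv f z / u z) * u z) =ᶠ[𝓝 (0:ℂ)] deriv f := by
    filter_upwards [ball_mem_nhds (0:ℂ) one_pos] with z hz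
    field_simp [hune z hz]
  have D1 : (fun z => deriv (fun w => deriv f w / u w) z * u z
      + (deriv f z / u z) * deriv u z) =ᶠ[𝓝 (0:ℂ)] deriv (deriv f) :=
    (ev_deriv_mul hha ua).symm.trans hprod.deriv
  have s4 : deriv (fun w => deriv f w / u w) 0 = deriv (deriv f) 0 / 2 := by
    have := D1.eq_of_nhds
    simp only [hf1, hu0, hu1, mul_one, one_div] at this
    linear_combination this
  refine ⟨s4, ?_⟩
  have h3' := D1.deriv_eq
  rw [deriv_fun_add ((aDeriv hha).fun_mul ua).differentiableAt
      (hha.fun_mul (aDeriv ua)).differentiableAt,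
    deriv_fun_mul (aDeriv hha).differentiableAt ua.differentiableAt,
    deriv_fun_mul hha.differentiableAt (aDeriv ua).differentiableAt] at h3'
  simp only [hf1, hu0, hu1, hu2, s4, mul_one, one_mul, div_one] at h3'
  linear_combination h3'

lemma mobius_le {a w : ℂ} (ha : ‖a‖ ≤ 1) (hw : ‖w‖ ≤ 1) :
    ‖w - a‖ ≤ ‖1 - (starRingEnd ℂ) a * w‖ := by
  have h1 : Complex.normSq (w - a) ≤ Complex.normSq (1 - (starRingEnd ℂ) a * w) := by
    have key : Complex.normSq (1 - (starRingEnd ℂ) a * w) - Complex.normSq (w - a)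
        = (1 - Complex.normSq a) * (1 - Complex.normSq w) := by
      simp [Complex.normSq_apply, Complex.sub_re, Complex.sub_im, Complex.mul_re,
        Complex.mul_im, Complex.conj_re, Complex.conj_im]
      ring
    have ha' : Complex.normSq a ≤ 1 := by
      nlinarith [Complex.sq_norm a, ha, norm_nonneg a]
    have hw' : Complex.normSq w ≤ 1 := by
      nlinarith [Complex.sq_norm w, hw, norm_nonneg w]
    nlinarith [key]
  calc ‖w - a‖ = Real.sqrt (Complex.normSq (w - a)) := by
        rw [Complex.norm_def]
    _ ≤ Real.sqrt (Complex.normSq (1 - (starRingEnd ℂ) a * w)) := Real.sqrt_le_sqrt h1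
    _ = ‖1 - (starRingEnd ℂ) a * w‖ := by rw [Complex.norm_def]

lemma sp0 {h : ℂ → ℂ} (hd : DifferentiableOn ℂ h (ball 0 1))
    (hm : MapsTo h (ball 0 1) (closedBall 0 1)) : ‖deriv h 0‖ ≤ 1 - ‖h 0‖^2 := by
  have h0m : (0:ℂ) ∈ ball (0:ℂ) 1 := mem_ball_self one_pos
  have ha : ‖h 0‖ ≤ 1 := by simpa using hm h0m
  rcases lt_or_eq_of_le ha with ha1 | ha1
  · -- ‖h 0‖ < 1
    set a := h 0 with haa
    have hden : ∀ w : ℂ, ‖w‖ ≤ 1 → 1 - (starRingEnd ℂ) a * w ≠ 0 := by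
      intro w hw H
      have : ‖(starRingEnd ℂ) a * w‖ < 1 := by
        rw [norm_mul, RCLike.norm_conj]
        calc ‖a‖ * ‖w‖ ≤ ‖a‖ * 1 := by
              exact mul_le_mul_of_nonneg_left hw (norm_nonneg a)
          _ < 1 := by simpa using ha1
      have h2 : (starRingEnd ℂ) a * w = 1 := by linear_combination -H
      rw [h2] at this; simp at this
    set k : ℂ → ℂ := fun z => (h z - a) / (1 - (starRingEnd ℂ) a * h z) with hk
    have hdk : DifferentiableOn ℂ k (ball 0 1) := by
      apply (hd.sub_const a).div
        ((differentiableOn_const 1).sub ((differentiableOn_const _).mul hd))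
      intro z hz
      exact hden _ (by simpa using hm hz)
    have hk0 : k 0 = 0 := by simp [hk, haa]
    have hmk : ∀ ε : ℝ, 0 < ε → MapsTo k (ball 0 1) (ball (k 0) (1 + ε)) := by
      intro ε hε z hz
      rw [hk0, mem_ball, dist_zero_right]
      have : ‖k z‖ ≤ 1 := by
        rw [hk]
        simp only [norm_div]
        rcases eq_or_ne (1 - (starRingEnd ℂ) a * h z) 0 with h0 | h0
        · exact absurd h0 (hden _ (by simpa using hm hz))
        · rw [div_le_one (norm_pos_iff.mpr h0)]
          exact mobius_le ha (by simpa using hm hz)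
      linarith
    have hk1 : ‖deriv k 0‖ ≤ 1 := by
      have step : ∀ ε : ℝ, 0 < ε → ‖deriv k 0‖ ≤ 1 + ε := by
        intro ε hε
        have := Complex.norm_deriv_le_div_of_mapsTo_ball hdk ((hmk ε hε).mono_right ball_subset_closedBall) one_pos
        simpa using this
      by_contra hcon
      push_neg at hcon
      have := step ((‖deriv k 0‖ - 1)/2) (by linarith)
      linarith
    have hda : DifferentiableAt ℂ h 0 := hd.differentiableAt (ball_mem_nhds _ one_pos)
    have hdenz : 1 - (starRingEnd ℂ) a * a ≠ 0 := hden a ha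
    have hderivk : deriv k 0 = deriv h 0 / (1 - (starRingEnd ℂ) a * a) := by
      rw [hk]
      rw [deriv_fun_div (hda.sub_const a)
        ((differentiableAt_const (1:ℂ)).fun_sub ((differentiableAt_const _).fun_mul hda))
        (by simpa [haa] using hdenz)]
      rw [deriv_sub_const, deriv_const_sub, deriv_const_mul _ hda]
      rw [← haa]
      field_simp
      ring
    have hcnorm : ‖(1 : ℂ) - (starRingEnd ℂ) a * a‖ = 1 - ‖a‖^2 := by
      have : (starRingEnd ℂ) a * a = (Complex.normSq a : ℂ) := by
        rw [mul_comm]; exact Complex.mul_conj a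
      rw [this]
      have h2 : (Complex.normSq a : ℝ) = ‖a‖^2 := by
        rw [← Complex.sq_norm]
      rw [← Complex.ofReal_one, ← Complex.ofReal_sub, Complex.norm_real]
      rw [Real.norm_eq_abs, h2, _root_.abs_of_nonneg (by nlinarith [ha1, norm_nonneg a])]
    have : ‖deriv k 0‖ = ‖deriv h 0‖ / (1 - ‖a‖^2) := by
      rw [hderivk, norm_div, hcnorm]
    rw [this] at hk1
    have hpos : 0 < 1 - ‖a‖^2 := by nlinarith [ha1, norm_nonneg a]
    calc ‖deriv h 0‖ = ‖deriv h 0‖ / (1 - ‖a‖^2) * (1 - ‖a‖^2) :=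
          (div_mul_cancel₀ _ (ne_of_gt hpos)).symm
      _ ≤ 1 * (1 - ‖a‖^2) := by exact mul_le_mul_of_nonneg_right hk1 (le_of_lt hpos)
      _ = 1 - ‖h 0‖^2 := by rw [one_mul, haa]
  · -- ‖h 0‖ = 1 : max modulus, h constant
    have hmax : IsMaxOn (norm ∘ h) (ball 0 1) 0 := by
      intro z hz
      simp only [Function.comp_apply, mem_setOf_eq]
      rw [ha1]
      simpa using hm hz
    have heq := Complex.eqOn_of_isPreconnected_of_isMaxOn_norm
      (convex_ball (0:ℂ) 1).isPreconnected isOpen_ball hd h0m hmax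
    have hev : h =ᶠ[𝓝 (0:ℂ)] fun _ => h 0 := by
      filter_upwards [ball_mem_nhds (0:ℂ) one_pos] with z hz
      exact heq hz
    rw [hev.deriv_eq, deriv_const]
    have h2 : ‖h 0‖^2 = 1 := by rw [ha1]; norm_num
    simp [h2]

lemma schwarz2 {φ : ℂ → ℂ} (hd : DifferentiableOn ℂ φ (ball 0 1)) (h0 : φ 0 = 0)
    (hm : MapsTo φ (ball 0 1) (ball 0 1)) :
    ‖deriv φ 0‖ ≤ 1 ∧ ‖deriv (deriv φ) 0‖ ≤ 2 * (1 - ‖deriv φ 0‖^2) := by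
  have h0m : (0:ℂ) ∈ ball (0:ℂ) 1 := mem_ball_self one_pos
  set ψ : ℂ → ℂ := dslope φ 0 with hψdef
  have hψd : DifferentiableOn ℂ ψ (ball 0 1) :=
    (differentiableOn_dslope (ball_mem_nhds _ one_pos)).mpr hd
  have hm' : MapsTo φ (ball 0 1) (ball (φ 0) 1) := by rw [h0]; exact hm
  have hψm : MapsTo ψ (ball 0 1) (closedBall 0 1) := by
    intro z hz
    rw [mem_closedBall, dist_zero_right]
    simpa using Complex.norm_dslope_le_div_of_mapsTo_ball hd (hm'.mono_right ball_subset_closedBall) hz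
  have hsp := sp0 hψd hψm
  have hψ0 : ψ 0 = deriv φ 0 := dslope_same φ 0
  have hφeq : φ = fun z => z * ψ z := by
    funext z
    rw [← sub_zero (φ z), ← h0]
    simpa [smul_eq_mul] using (sub_smul_dslope φ 0 z).symm
  have ψa : AnalyticAt ℂ ψ 0 := (hψd.analyticOnNhd isOpen_ball) 0 h0m
  have hd2 : deriv (deriv φ) 0 = 2 * deriv ψ 0 := by rw [hφeq, d2_id_mul ψa]
  constructor
  · rw [← hψ0]
    simpa using hψm h0m
  · rw [hd2, norm_mul, ← hψ0]
    simp only [Complex.norm_ofNat]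
    nlinarith [hsp]

lemma cara {β : ℝ} {h : ℂ → ℂ} (hβ : β < 1) (hd : DifferentiableOn ℂ h (ball 0 1))
    (h0 : h 0 = 1) (hre : ∀ z ∈ ball (0:ℂ) 1, β < (h z).re) :
    ‖deriv h 0‖ ≤ 2*(1-β) ∧ ‖deriv (deriv h) 0‖ ≤ 4*(1-β) := by
  have h0m : (0:ℂ) ∈ ball (0:ℂ) 1 := mem_ball_self one_pos
  set c : ℂ := ((1 - 2*β : ℝ) : ℂ) with hc
  have hcre : (c : ℂ).re = 1 - 2*β := by simp [hc]
  set φ : ℂ → ℂ := fun z => (h z - 1) / (h z + c) with hφdef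
  have hden : ∀ z ∈ ball (0:ℂ) 1, h z + c ≠ 0 := by
    intro z hz H
    have : (h z + c).re = (h z).re + (1 - 2*β) := by simp [hc, Complex.add_re]
    rw [H] at this
    simp at this
    have := hre z hz
    linarith
  have hφd : DifferentiableOn ℂ φ (ball 0 1) :=
    (hd.sub_const 1).div (hd.add_const c) hden
  have hφ0 : φ 0 = 0 := by simp [hφdef, h0]
  have hφm : MapsTo φ (ball 0 1) (ball 0 1) := by
    intro z hz
    rw [mem_ball, dist_zero_right, hφdef]
    simp only [norm_div]
    rw [div_lt_one (norm_pos_iff.mpr (hden z hz))]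
    have key : Complex.normSq (h z + c) - Complex.normSq (h z - 1)
        = 4*(1-β)*((h z).re - β) := by
      simp [Complex.normSq_apply, Complex.add_re, Complex.add_im, Complex.sub_re,
        Complex.sub_im, hc]
      ring
    have hlt : Complex.normSq (h z - 1) < Complex.normSq (h z + c) := by
      nlinarith [hre z hz, key]
    calc ‖h z - 1‖ = Real.sqrt (Complex.normSq (h z - 1)) := by
          rw [Complex.norm_def]
      _ < Real.sqrt (Complex.normSq (h z + c)) :=
          Real.sqrt_lt_sqrt (Complex.normSq_nonneg _) hlt
      _ = ‖h z + c‖ := by rw [Complex.norm_def]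
  obtain ⟨hs1, hs2⟩ := schwarz2 hφd hφ0 hφm
  have ha : AnalyticAt ℂ h 0 := (hd.analyticOnNhd isOpen_ball) 0 h0m
  have φa : AnalyticAt ℂ φ 0 := (hφd.analyticOnNhd isOpen_ball) 0 h0m
  -- identity : h z = 1 + c * φ z + h z * φ z  (+ 2(1-β)... check) on ball
  have hident : h =ᶠ[𝓝 (0:ℂ)] fun z => 1 + (c * φ z + h z * φ z) := by
    filter_upwards [ball_mem_nhds (0:ℂ) one_pos] with z hz
    have hdz := hden z hz
    rw [hφdef]
    field_simp
    ring
  have D1 : deriv h =ᶠ[𝓝 (0:ℂ)]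
      fun z => c * deriv φ z + (deriv h z * φ z + h z * deriv φ z) := by
    refine hident.deriv.trans ?_
    filter_upwards [φa.eventually_analyticAt, ha.eventually_analyticAt] with z hφz hhz
    rw [deriv_const_add, deriv_fun_add (analyticAt_const.fun_mul hφz).differentiableAt
        (hhz.fun_mul hφz).differentiableAt, deriv_const_mul _ hφz.differentiableAt,
      deriv_fun_mul hhz.differentiableAt hφz.differentiableAt]
  have e1 : deriv h 0 = (2 - 2*β) * deriv φ 0 := by
    have := D1.eq_of_nhds
    rw [hφ0, h0] at this
    rw [this, hc]
    push_cast
    ring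
  have e2 : deriv (deriv h) 0 =
      (2 - 2*β) * deriv (deriv φ) 0 + 2 * deriv h 0 * deriv φ 0 := by
    have h3' := D1.deriv_eq
    have dA : DifferentiableAt ℂ (fun z => deriv h z * φ z + h z * deriv φ z) 0 :=
      (((aDeriv ha).mul φa).add (ha.mul (aDeriv φa))).differentiableAt
    rw [deriv_fun_add (analyticAt_const.fun_mul (aDeriv φa)).differentiableAt dA,
      deriv_fun_add ((aDeriv ha).fun_mul φa).differentiableAt (ha.fun_mul (aDeriv φa)).differentiableAt,
      deriv_const_mul _ (aDeriv φa).differentiableAt,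
      deriv_fun_mul (aDeriv ha).differentiableAt φa.differentiableAt,
      deriv_fun_mul ha.differentiableAt (aDeriv φa).differentiableAt] at h3'
    rw [hφ0, h0] at h3'
    rw [h3', hc]
    push_cast
    ring
  have hβpos : (0:ℝ) < 1 - β := by linarith
  constructor
  · rw [e1, norm_mul]
    have : ‖((2:ℂ) - 2*β)‖ = 2 - 2*β := by
      rw [show ((2:ℂ) - 2*β) = ((2 - 2*β : ℝ) : ℂ) by push_cast; ring, Complex.norm_real,
        Real.norm_eq_abs, _root_.abs_of_nonneg (by linarith)]
    rw [this]
    nlinarith [hs1, norm_nonneg (deriv φ 0)]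
  · rw [e2]
    have hn1 : ‖((2:ℂ) - 2*β) * deriv (deriv φ) 0‖ = (2-2*β) * ‖deriv (deriv φ) 0‖ := by
      rw [norm_mul, show ((2:ℂ) - 2*β) = ((2 - 2*β : ℝ) : ℂ) by push_cast; ring,
        Complex.norm_real, Real.norm_eq_abs, _root_.abs_of_nonneg (by linarith)]
    have hn2 : ‖2 * deriv h 0 * deriv φ 0‖ = 2 * ‖deriv h 0‖ * ‖deriv φ 0‖ := by
      rw [norm_mul, norm_mul]
      simp
    calc ‖((2:ℂ) - 2*β) * deriv (deriv φ) 0 + 2 * deriv h 0 * deriv φ 0‖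
        ≤ ‖((2:ℂ) - 2*β) * deriv (deriv φ) 0‖ + ‖2 * deriv h 0 * deriv φ 0‖ := norm_add_le _ _
      _ = (2-2*β) * ‖deriv (deriv φ) 0‖ + 2 * ‖deriv h 0‖ * ‖deriv φ 0‖ := by rw [hn1, hn2]
      _ ≤ 4*(1-β) := by
          have hd1 : ‖deriv h 0‖ = (2-2*β) * ‖deriv φ 0‖ := by
            rw [e1, norm_mul, show ((2:ℂ) - 2*β) = ((2 - 2*β : ℝ) : ℂ) by push_cast; ring,
              Complex.norm_real, Real.norm_eq_abs, _root_.abs_of_nonneg (by linarith)]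
          rw [hd1]
          nlinarith [hs1, hs2, norm_nonneg (deriv φ 0), norm_nonneg (deriv (deriv φ) 0)]

theorem stmt6 (β : ℝ) (hβ0 : 0 ≤ β) (hβ1 : β < 1)
    (f F : ℂ → ℂ)
    (hf : DifferentiableOn ℂ f (ball 0 1)) (hf0 : f 0 = 0) (hf1 : deriv f 0 = 1)
    (hfi : InjOn f (ball 0 1))
    (hF : DifferentiableOn ℂ F (ball 0 1)) (hF0 : F 0 = 0) (hFi : InjOn F (ball 0 1))
    (hFf : ∀ᶠ z in nhds (0 : ℂ), F (f z) = z)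
    (g : ℂ → ℂ) (hg0 : g 0 = 1)
    (hgf : ∀ z ∈ ball (0 : ℂ) 1, z ≠ 0 → g z = z * deriv f z / f z)
    (hgre : ∀ z ∈ ball (0 : ℂ) 1, β < (g z).re)
    (G : ℂ → ℂ) (hG0 : G 0 = 1)
    (hGF : ∀ w ∈ ball (0 : ℂ) 1, w ≠ 0 → G w = w * deriv F w / F w)
    (hGre : ∀ w ∈ ball (0 : ℂ) 1, β < (G w).re) :
    ‖iteratedDeriv 2 f 0 / 2‖ ≤ min (Real.sqrt (2 * (1 - β))) (Real.sqrt ((1 - β) * (3 - 2 * β))) := by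
  have h0m : (0:ℂ) ∈ ball (0:ℂ) 1 := mem_ball_self one_pos
  have hfa : AnalyticAt ℂ f 0 := (hf.analyticOnNhd isOpen_ball) 0 h0m
  have hFa : AnalyticAt ℂ F 0 := (hF.analyticOnNhd isOpen_ball) 0 h0m
  obtain ⟨hF1, hFc2, hFc3⟩ := F_coeffs hfa hFa hf0 hf1 hFf
  have hfne : ∀ z ∈ ball (0:ℂ) 1, z ≠ 0 → f z ≠ 0 := by
    intro z hz hz0 hzz; exact hz0 (hfi hz h0m (by rw [hzz, hf0]))
  have hFne : ∀ z ∈ ball (0:ℂ) 1, z ≠ 0 → F z ≠ 0 := by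
    intro z hz hz0 hzz; exact hz0 (hFi hz h0m (by rw [hzz, hF0]))
  obtain ⟨h, hhd, hh0, hhval, hh1, hh2⟩ := side hf hf0 hf1 hfne
  obtain ⟨H, hHd, hH0, hHval, hH1, hH2⟩ := side hF hF0 hF1 hFne
  have hhre : ∀ z ∈ ball (0:ℂ) 1, β < (h z).re := by
    intro z hz
    rcases eq_or_ne z 0 with rfl | hz0
    · rw [hh0]; simpa using hβ1
    · rw [hhval z hz hz0, ← hgf z hz hz0]; exact hgre z hz
  have hHre : ∀ z ∈ ball (0:ℂ) 1, β < (H z).re := by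
    intro z hz
    rcases eq_or_ne z 0 with rfl | hz0
    · rw [hH0]; simpa using hβ1
    · rw [hHval z hz hz0, ← hGF z hz hz0]; exact hGre z hz
  obtain ⟨c1, c2⟩ := cara hβ1 hhd hh0 hhre
  obtain ⟨C1, C2⟩ := cara hβ1 hHd hH0 hHre
  set A := deriv (deriv f) 0 with hA
  set B := deriv (deriv (deriv f)) 0 with hB
  have hsum : deriv (deriv h) 0 + deriv (deriv H) 0 = A^2 := by
    rw [hh2, hH2, hFc2, hFc3]; ring
  have hA2 : ‖A^2‖ ≤ 8*(1-β) := by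
    calc ‖A^2‖ = ‖deriv (deriv h) 0 + deriv (deriv H) 0‖ := by rw [hsum]
      _ ≤ ‖deriv (deriv h) 0‖ + ‖deriv (deriv H) 0‖ := norm_add_le _ _
      _ ≤ 4*(1-β) + 4*(1-β) := add_le_add c2 C2
      _ = 8*(1-β) := by ring
  have hiter : iteratedDeriv 2 f 0 = A := by
    rw [iteratedDeriv_succ, iteratedDeriv_one]
  have goalEq : ‖iteratedDeriv 2 f 0 / 2‖ = ‖A‖/2 := by
    rw [hiter, norm_div]
    simp
  rw [goalEq]
  set t : ℝ := ‖A‖/2 with ht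
  have htn : 0 ≤ t := by positivity
  have ht2 : t^2 ≤ 2*(1-β) := by
    have : ‖A^2‖ = ‖A‖^2 := by rw [norm_pow]
    rw [ht]
    nlinarith [hA2, this]
  have htA : t ≤ 2*(1-β) := by
    have : ‖deriv h 0‖ = t := by rw [hh1, norm_div, ht]; simp
    linarith [this ▸ c1]
  have sqrt_t : t = Real.sqrt (t^2) := (Real.sqrt_sq htn).symm
  apply le_min
  · rw [sqrt_t]; exact Real.sqrt_le_sqrt ht2
  · rw [sqrt_t]
    apply Real.sqrt_le_sqrt
    rcases le_total β (1/2) with hb | hb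
    · nlinarith [ht2]
    · nlinarith [htA, htn]
end
end
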